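/- (Stackelberg, interior-maximum case, Case 6 of Theorem 2.) Suppose (ln τ)·(k0 − k1) > 0 and k0 + k1 > 0, and set d* = √(2·(ln τ)·(k0 − k1)/(k0 + k1)) (which is a positive real). Then r is strictly increasing on (0, d*] and strictly decreasing on [d*, ∞); consequently, for every d_max ≥ d*, the minimum of r over (0, d_max] is approached only at the endpoints, i.e., inf over (0,d_max] of r equals min{inf_{d→0+} r(d), r(d_max)}. -/

import Mathlib

open Filter

/-- The Gaussian Q-function `Q(x) = (1/√(2π)) ∫_x^∞ exp(−t²/2) dt`. -/
noncomputable def gaussQ (x : ℝ) : ℝ :=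
  (Real.sqrt (2 * Real.pi))⁻¹ * ∫ t in Set.Ioi x, Real.exp (-(t ^ 2 / 2))


lemma gauss_integrable : MeasureTheory.Integrable (fun t : ℝ => Real.exp (-(t ^ 2 / 2))) := by
  have h := integrable_exp_neg_mul_sq (by norm_num : (0:ℝ) < 1/2)
  have : (fun t : ℝ => Real.exp (-(t ^ 2 / 2))) = fun t : ℝ => Real.exp (-(1/2) * t ^ 2) := by
    funext t; ring_nf
  rw [this]; exact h

lemma gauss_total : (∫ t : ℝ, Real.exp (-(t ^ 2 / 2))) = Real.sqrt (2 * Real.pi) := by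
  have : (fun t : ℝ => Real.exp (-(t ^ 2 / 2))) = fun t : ℝ => Real.exp (-(1/2) * t ^ 2) := by
    funext t; ring_nf
  rw [this, integral_gaussian]
  rw [show (Real.pi / (1/2)) = 2 * Real.pi by ring]

lemma gaussQ_eq_sub (x : ℝ) :
    gaussQ x = gaussQ 0
      - (Real.sqrt (2 * Real.pi))⁻¹ * ∫ t in (0:ℝ)..x, Real.exp (-(t ^ 2 / 2)) := by
  have hint := gauss_integrable
  have key : ∀ y : ℝ, (∫ t in Set.Ioi y, Real.exp (-(t ^ 2 / 2)))
      = (∫ t : ℝ, Real.exp (-(t ^ 2 / 2))) - ∫ t in Set.Iic y, Real.exp (-(t ^ 2 / 2)) := by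
    intro y
    have h := MeasureTheory.integral_add_compl (measurableSet_Iic (a := y)) hint
    rw [Set.compl_Iic] at h
    linarith
  have hIic := intervalIntegral.integral_Iic_sub_Iic (μ := MeasureTheory.volume)
    (f := fun t : ℝ => Real.exp (-(t ^ 2 / 2))) (a := (0:ℝ)) (b := x)
    hint.integrableOn hint.integrableOn
  unfold gaussQ
  rw [key x, key 0, ← hIic]
  ring

lemma gaussQ_hasDerivAt (x : ℝ) :
    HasDerivAt gaussQ (-((Real.sqrt (2 * Real.pi))⁻¹ * Real.exp (-(x ^ 2 / 2)))) x := by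
  have hcont : Continuous fun t : ℝ => Real.exp (-(t ^ 2 / 2)) := by continuity
  have h1 := (hcont.integral_hasStrictDerivAt 0 x).hasDerivAt
  have h2 : HasDerivAt (fun y : ℝ => gaussQ 0
      - (Real.sqrt (2 * Real.pi))⁻¹ * ∫ t in (0:ℝ)..y, Real.exp (-(t ^ 2 / 2)))
      (-((Real.sqrt (2 * Real.pi))⁻¹ * Real.exp (-(x ^ 2 / 2)))) x := by
    simpa using ((h1.const_mul ((Real.sqrt (2 * Real.pi))⁻¹)).const_sub (gaussQ 0))
  have : gaussQ = fun y : ℝ => gaussQ 0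
      - (Real.sqrt (2 * Real.pi))⁻¹ * ∫ t in (0:ℝ)..y, Real.exp (-(t ^ 2 / 2)) :=
    funext gaussQ_eq_sub
  rw [this]
  exact h2

lemma gaussQ_nonneg (x : ℝ) : 0 ≤ gaussQ x := by
  apply mul_nonneg (inv_nonneg.2 (Real.sqrt_nonneg _))
  exact MeasureTheory.setIntegral_nonneg measurableSet_Ioi fun t _ => (Real.exp_pos _).le

lemma gaussQ_le_one (x : ℝ) : gaussQ x ≤ 1 := by
  have hc : 0 < Real.sqrt (2 * Real.pi) := Real.sqrt_pos.2 (by positivity)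
  have h := MeasureTheory.setIntegral_le_integral (s := Set.Ioi x) gauss_integrable
    (Filter.Eventually.of_forall fun t => (Real.exp_pos _).le)
  rw [gauss_total] at h
  unfold gaussQ
  rw [inv_mul_le_iff₀ hc, mul_one]
  exact h

set_option maxHeartbeats 1600000 in
/-- Stackelberg, interior-maximum case (Case 6 of Theorem 2): if
`(ln τ)·(k0 − k1) > 0` and `k0 + k1 > 0`, the transmitter Bayes risk is strictly
increasing on `(0, d*]` and strictly decreasing on `[d*, ∞)`, where
`d* = √(2·(ln τ)·(k0 − k1)/(k0 + k1))`; hence for `d_max ≥ d*` the infimum of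
`r` over `(0, d_max]` is `min{lim_{d→0⁺} r(d), r(d_max)}`. -/
theorem stmt_10 (π0 π1 C00 C01 C10 C11 τ ζ : ℝ)
    (hπ0 : 0 < π0) (hπ1 : 0 < π1) (hτ : 0 < τ) (hζ : ζ = 1 ∨ ζ = -1)
    (k0 k1 : ℝ)
    (hk0 : k0 = π0 * ζ * (C10 - C00) * τ ^ (-(1 / 2) : ℝ))
    (hk1 : k1 = π1 * ζ * (C01 - C11) * τ ^ ((1 / 2) : ℝ))
    (r : ℝ → ℝ)
    (hr : r = fun d : ℝ => π0 * C00 + π1 * C11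
        + π0 * (C10 - C00) * gaussQ (ζ * (Real.log τ / d + d / 2))
        + π1 * (C01 - C11) * gaussQ (ζ * (-Real.log τ / d + d / 2)))
    (hcase1 : 0 < Real.log τ * (k0 - k1)) (hcase2 : 0 < k0 + k1)
    (dstar : ℝ)
    (hdstar : dstar = Real.sqrt (2 * Real.log τ * (k0 - k1) / (k0 + k1))) :
    0 < dstar ∧
    StrictMonoOn r (Set.Ioc (0 : ℝ) dstar) ∧
    StrictAntiOn r (Set.Ici dstar) ∧
    (∀ dmax : ℝ, dstar ≤ dmax →
      ∃ L : ℝ, Tendsto r (nhdsWithin 0 (Set.Ioi (0 : ℝ))) (nhds L) ∧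
        sInf (r '' Set.Ioc (0 : ℝ) dmax) = min L (r dmax)) := by
  have hratio : 0 < 2 * Real.log τ * (k0 - k1) / (k0 + k1) :=
    div_pos (by nlinarith) hcase2
  have hd0 : 0 < dstar := by rw [hdstar]; exact Real.sqrt_pos.2 hratio
  have hsq : dstar ^ 2 = 2 * Real.log τ * (k0 - k1) / (k0 + k1) := by
    rw [hdstar, sq, Real.mul_self_sqrt hratio.le]
  have hkey : dstar ^ 2 * (k0 + k1) = 2 * Real.log τ * (k0 - k1) := by
    rw [hsq]; field_simp
  have hζsq : ζ ^ 2 = 1 := by rcases hζ with rfl | rfl <;> norm_num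
  -- derivative of r on (0, ∞)
  have hderiv : ∀ d : ℝ, 0 < d → HasDerivAt r
      (((k0 - k1) * Real.log τ / d ^ 2 - (k0 + k1) / 2)
        * ((Real.sqrt (2 * Real.pi))⁻¹
          * Real.exp (-((Real.log τ) ^ 2 / (2 * d ^ 2) + d ^ 2 / 8)))) d := by
    intro d hd
    have hdne : d ≠ 0 := ne_of_gt hd
    have ha : HasDerivAt (fun x : ℝ => ζ * (Real.log τ / x + x / 2))
        (ζ * (Real.log τ * -(d ^ 2)⁻¹ + 1 / 2)) d := by
      have hfun : (fun x : ℝ => ζ * (Real.log τ / x + x / 2))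
          = fun x : ℝ => ζ * (Real.log τ * x⁻¹ + x / 2) := by
        funext x; rw [div_eq_mul_inv]
      rw [hfun]
      exact (((hasDerivAt_inv hdne).const_mul (Real.log τ)).add
        ((hasDerivAt_id d).div_const 2)).const_mul ζ
    have hb : HasDerivAt (fun x : ℝ => ζ * (-Real.log τ / x + x / 2))
        (ζ * (-Real.log τ * -(d ^ 2)⁻¹ + 1 / 2)) d := by
      have hfun : (fun x : ℝ => ζ * (-Real.log τ / x + x / 2))
          = fun x : ℝ => ζ * (-Real.log τ * x⁻¹ + x / 2) := by
        funext x; rw [div_eq_mul_inv]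
      rw [hfun]
      exact (((hasDerivAt_inv hdne).const_mul (-Real.log τ)).add
        ((hasDerivAt_id d).div_const 2)).const_mul ζ
    have hQa := (gaussQ_hasDerivAt (ζ * (Real.log τ / d + d / 2))).comp d ha
    have hQb := (gaussQ_hasDerivAt (ζ * (-Real.log τ / d + d / 2))).comp d hb
    simp only [Function.comp_def] at hQa hQb
    rw [hr]
    have hR := ((hQa.const_mul (π0 * (C10 - C00))).const_add
      (π0 * C00 + π1 * C11)).add (hQb.const_mul (π1 * (C01 - C11)))
    convert hR using 1
    case e'_4 => rfl
    case e'_5 => rfl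
    case e'_8 => rfl
    have e1 : Real.exp (-((ζ * (Real.log τ / d + d / 2)) ^ 2 / 2))
        = Real.exp (-((Real.log τ) ^ 2 / (2 * d ^ 2) + d ^ 2 / 8))
          * Real.exp (Real.log τ * (-(1 / 2))) := by
      rw [← Real.exp_add]; congr 1
      rw [mul_pow, hζsq, one_mul]; field_simp; ring
    have e2 : Real.exp (-((ζ * (-Real.log τ / d + d / 2)) ^ 2 / 2))
        = Real.exp (-((Real.log τ) ^ 2 / (2 * d ^ 2) + d ^ 2 / 8))
          * Real.exp (Real.log τ * (1 / 2)) := by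
      rw [← Real.exp_add]; congr 1
      rw [mul_pow, hζsq, one_mul]; field_simp; ring
    rw [hk0, hk1, Real.rpow_def_of_pos hτ, Real.rpow_def_of_pos hτ, e1, e2]
    generalize Real.exp (-(Real.log τ ^ 2 / (2 * d ^ 2) + d ^ 2 / 8)) = E
    generalize Real.exp (Real.log τ * -(1 / 2)) = X
    generalize Real.exp (Real.log τ * (1 / 2)) = Y
    generalize (Real.sqrt (2 * Real.pi))⁻¹ = c
    rcases hζ with rfl | rfl <;> (field_simp; ring)
  have hEpos : ∀ d : ℝ, 0 < (Real.sqrt (2 * Real.pi))⁻¹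
      * Real.exp (-((Real.log τ) ^ 2 / (2 * d ^ 2) + d ^ 2 / 8)) := by
    intro d; positivity
  -- strict monotonicity
  have smono : StrictMonoOn r (Set.Ioc (0 : ℝ) dstar) := by
    apply strictMonoOn_of_deriv_pos (convex_Ioc _ _)
    · exact fun x hx => ((hderiv x hx.1).continuousAt).continuousWithinAt
    · intro x hx
      rw [interior_Ioc] at hx
      rw [(hderiv x hx.1).deriv]
      have hx2 : x ^ 2 < dstar ^ 2 := by nlinarith [hx.1, hx.2]
      have hx2pos : 0 < x ^ 2 := pow_pos hx.1 2
      apply mul_pos _ (hEpos x)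
      rw [sub_pos, div_lt_div_iff₀ (by norm_num : (0:ℝ) < 2) hx2pos]
      nlinarith
  have santi : StrictAntiOn r (Set.Ici dstar) := by
    apply strictAntiOn_of_deriv_neg (convex_Ici _)
    · exact fun x hx => ((hderiv x (lt_of_lt_of_le hd0 hx)).continuousAt).continuousWithinAt
    · intro x hx
      rw [interior_Ici] at hx
      have hxpos : 0 < x := lt_trans hd0 hx
      rw [(hderiv x hxpos).deriv]
      have hx2 : dstar ^ 2 < x ^ 2 := by
        nlinarith [mul_pos (sub_pos.2 hx) (by linarith : (0:ℝ) < x + dstar)]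
      have hx2pos : 0 < x ^ 2 := pow_pos hxpos 2
      apply mul_neg_of_neg_of_pos _ (hEpos x)
      rw [sub_neg, div_lt_div_iff₀ hx2pos (by norm_num : (0:ℝ) < 2)]
      nlinarith
  refine ⟨hd0, smono, santi, ?_⟩
  intro dmax hdm
  -- lower bound for r
  have hB : ∀ d : ℝ, π0 * C00 + π1 * C11 - |π0 * (C10 - C00)| - |π1 * (C01 - C11)| ≤ r d := by
    intro d
    have key : ∀ a x : ℝ, 0 ≤ x → x ≤ 1 → -|a| ≤ a * x := by
      intro a x h0 h1
      rcases le_or_gt 0 a with h | h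
      · nlinarith [abs_nonneg a]
      · nlinarith [neg_abs_le a]
    have h1 := key (π0 * (C10 - C00)) _ (gaussQ_nonneg (ζ * (Real.log τ / d + d / 2)))
      (gaussQ_le_one _)
    have h2 := key (π1 * (C01 - C11)) _ (gaussQ_nonneg (ζ * (-Real.log τ / d + d / 2)))
      (gaussQ_le_one _)
    rw [hr]; dsimp only; linarith
  set B := π0 * C00 + π1 * C11 - |π0 * (C10 - C00)| - |π1 * (C01 - C11)| with hBdef
  have hne : (Set.Ioo (0:ℝ) dstar).Nonempty := ⟨dstar / 2, by constructor <;> nlinarith⟩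
  have hbdd : BddBelow (r '' Set.Ioo 0 dstar) := ⟨B, by rintro _ ⟨x, -, rfl⟩; exact hB x⟩
  have hmonoO : MonotoneOn r (Set.Ioo 0 dstar) :=
    (smono.mono Set.Ioo_subset_Ioc_self).monotoneOn
  refine ⟨sInf (r '' Set.Ioo 0 dstar),
    MonotoneOn.tendsto_nhdsWithin_Ioo_right hne hmonoO hbdd, ?_⟩
  have hdmaxmem : dmax ∈ Set.Ioc (0:ℝ) dmax := ⟨lt_of_lt_of_le hd0 hdm, le_rfl⟩
  have hSne : (r '' Set.Ioc (0:ℝ) dmax).Nonempty := ⟨r dmax, dmax, hdmaxmem, rfl⟩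
  have hSbdd : BddBelow (r '' Set.Ioc (0:ℝ) dmax) := ⟨B, by rintro _ ⟨x, -, rfl⟩; exact hB x⟩
  have hlb : ∀ y ∈ r '' Set.Ioc (0:ℝ) dmax, min (sInf (r '' Set.Ioo 0 dstar)) (r dmax) ≤ y := by
    rintro _ ⟨x, ⟨hx0, hxm⟩, rfl⟩
    rcases le_or_gt x dstar with hxs | hxs
    · have hx2 : x / 2 ∈ Set.Ioo (0:ℝ) dstar := ⟨by linarith, by nlinarith⟩
      have hL : sInf (r '' Set.Ioo 0 dstar) ≤ r (x / 2) := csInf_le hbdd ⟨x / 2, hx2, rfl⟩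
      have hmm : r (x / 2) ≤ r x :=
        (smono ⟨hx2.1, hx2.2.le⟩ ⟨hx0, hxs⟩ (by linarith)).le
      exact le_trans (min_le_left _ _) (hL.trans hmm)
    · have := santi.antitoneOn (Set.mem_Ici.2 hxs.le) (Set.mem_Ici.2 hdm) hxm
      exact le_trans (min_le_right _ _) this
  refine le_antisymm (le_min ?_ ?_) (le_csInf hSne hlb)
  · exact le_trans (csInf_le_csInf hSbdd (hne.image r)
      (Set.image_mono fun x hx => ⟨hx.1, hx.2.le.trans hdm⟩)) le_rfl
  · exact csInf_le hSbdd ⟨dmax, hdmaxmem, rfl⟩
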